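/- Define f(q) := (4q⁴ − 5q² + 1)K(q) + (−8q⁴ + 8q² − 1)E(q) on [1/√2, 1). Then f(1/√2) > 0, f(q) < 0 for q ∈ [q*, 1) (where q* is the unique zero of 2E − K in (0,1)), and f is strictly decreasing on (1/√2, q*). Consequently there exists a unique q̂ ∈ (1/√2, q*) with f(q̂) = 0, and f > 0 on [1/√2, q̂) while f < 0 on (q̂, 1). -/

import Mathlib

open Real Set Filter
open intervalIntegral MeasureTheory

noncomputable def Kc (q : ℝ) : ℝ := ∫ θ in (0:ℝ)..(π/2), 1 / Real.sqrt (1 - q^2 * Real.sin θ^2)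

noncomputable def Ec (q : ℝ) : ℝ := ∫ θ in (0:ℝ)..(π/2), Real.sqrt (1 - q^2 * Real.sin θ^2)

noncomputable def fc (q : ℝ) : ℝ := (4*q^4 - 5*q^2 + 1) * Kc q + (-8*q^4 + 8*q^2 - 1) * Ec q

lemma base_pos {q : ℝ} (hq : q^2 < 1) (θ : ℝ) : 0 < 1 - q^2 * Real.sin θ^2 := by
  nlinarith [Real.sin_sq_le_one θ, sq_nonneg q, sq_nonneg (Real.sin θ)]

lemma w_pos {q : ℝ} (hq : q^2 < 1) (θ : ℝ) : 0 < Real.sqrt (1 - q^2 * Real.sin θ^2) :=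
  Real.sqrt_pos.mpr (base_pos hq θ)

lemma cont_base (q : ℝ) : Continuous fun θ : ℝ => 1 - q^2 * Real.sin θ^2 := by
  continuity

lemma cont_w (q : ℝ) : Continuous fun θ : ℝ => Real.sqrt (1 - q^2 * Real.sin θ^2) :=
  (cont_base q).sqrt

lemma cont_invw {q : ℝ} (hq : q^2 < 1) :
    Continuous fun θ : ℝ => 1 / Real.sqrt (1 - q^2 * Real.sin θ^2) :=
  continuous_const.div (cont_w q) fun θ => (w_pos hq θ).ne'

lemma intgr_w (q : ℝ) : IntervalIntegrable
    (fun θ : ℝ => Real.sqrt (1 - q^2 * Real.sin θ^2)) volume 0 (π/2) :=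
  (cont_w q).intervalIntegrable _ _

lemma intgr_invw {q : ℝ} (hq : q^2 < 1) : IntervalIntegrable
    (fun θ : ℝ => 1 / Real.sqrt (1 - q^2 * Real.sin θ^2)) volume 0 (π/2) :=
  (cont_invw hq).intervalIntegrable _ _

lemma Kc_pos {q : ℝ} (hq : q^2 < 1) : 0 < Kc q :=
  intervalIntegral_pos_of_pos_on (intgr_invw hq)
    (fun θ _ => one_div_pos.mpr (w_pos hq θ)) (by positivity)

lemma Ec_pos {q : ℝ} (hq : q^2 < 1) : 0 < Ec q :=
  intervalIntegral_pos_of_pos_on (intgr_w q)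
    (fun θ _ => w_pos hq θ) (by positivity)

lemma Ec_le_Kc {q : ℝ} (hq : q^2 < 1) : Ec q ≤ Kc q := by
  refine integral_mono_on (by positivity) (intgr_w q) (intgr_invw hq) fun θ _ => ?_
  have h1 := w_pos hq θ
  have h2 : Real.sqrt (1 - q^2 * Real.sin θ^2) ≤ 1 := by
    exact Real.sqrt_le_one.mpr (by nlinarith [sq_nonneg q, sq_nonneg (Real.sin θ)])
  rw [le_div_iff₀ h1]
  nlinarith

lemma q0_sq : (1 / Real.sqrt 2)^2 = 1/2 := by
  rw [div_pow, one_pow, Real.sq_sqrt (by norm_num : (2:ℝ) ≥ 0)]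

lemma q0_mem : (1 / Real.sqrt 2) ∈ Ioo (0:ℝ) 1 := by
  constructor
  · positivity
  · rw [div_lt_one (by positivity)]
    nlinarith [Real.sq_sqrt (by norm_num : (2:ℝ) ≥ 0), Real.sqrt_nonneg 2]

lemma twoEK_q0 : Kc (1 / Real.sqrt 2) < 2 * Ec (1 / Real.sqrt 2) := by
  set q : ℝ := 1 / Real.sqrt 2 with hqdef
  have hq : q^2 < 1 := by rw [q0_sq]; norm_num
  have key : 0 < 2 * Ec q - Kc q := by
    have heq : 2 * Ec q - Kc q
        = ∫ θ in (0:ℝ)..(π/2), (2 * Real.sqrt (1 - q^2 * Real.sin θ^2)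
            - 1 / Real.sqrt (1 - q^2 * Real.sin θ^2)) := by
      rw [Ec, Kc, ← intervalIntegral.integral_const_mul,
        ← intervalIntegral.integral_sub ((intgr_w q).const_mul 2) (intgr_invw hq)]
    rw [heq]
    refine intervalIntegral_pos_of_pos_on
      ((continuous_const.mul (cont_w q)).sub (cont_invw hq) |>.intervalIntegrable _ _)
      (fun θ hθ => ?_) (by positivity)
    have h1 := w_pos hq θ
    have hc : 0 < Real.cos θ := Real.cos_pos_of_mem_Ioo
      ⟨by linarith [hθ.1, pi_pos], hθ.2⟩
    have hs : Real.sin θ^2 < 1 := by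
      nlinarith [Real.sin_sq_add_cos_sq θ]
    rw [sub_pos, div_lt_iff₀ h1]
    have hsq : Real.sqrt (1 - q^2 * Real.sin θ^2) ^ 2 = 1 - q^2 * Real.sin θ^2 :=
      Real.sq_sqrt (base_pos hq θ).le
    have hq2 : q^2 = 1/2 := q0_sq
    nlinarith
  linarith

noncomputable def JE (q : ℝ) : ℝ :=
  ∫ θ in (0:ℝ)..(π/2), Real.sin θ^2 / Real.sqrt (1 - q^2 * Real.sin θ^2)

noncomputable def JK (q : ℝ) : ℝ :=
  ∫ θ in (0:ℝ)..(π/2), Real.sin θ^2 / (Real.sqrt (1 - q^2 * Real.sin θ^2))^3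

lemma sq_lt_of_ball {q x : ℝ} (hq0 : 0 < q) (hq1 : q < 1)
    (hx : x ∈ Metric.ball q ((1-q)/2)) : x^2 < ((1+q)/2)^2 := by
  have h := Metric.mem_ball.mp hx
  rw [Real.dist_eq, abs_lt] at h
  have h1 : -((1+q)/2) < x := by linarith [h.1, h.2]
  have h2 : x < (1+q)/2 := by linarith [h.1, h.2]
  exact sq_lt_sq' h1 h2

lemma r_lt_one {q : ℝ} (hq0 : 0 < q) (hq1 : q < 1) : ((1+q)/2)^2 < 1 := by nlinarith

lemma hasDerivAt_sqrt_base {x : ℝ} (t : ℝ) (hx : x^2 * Real.sin t^2 < 1) :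
    HasDerivAt (fun y : ℝ => Real.sqrt (1 - y^2 * Real.sin t^2))
      (-x * (Real.sin t^2 / Real.sqrt (1 - x^2 * Real.sin t^2))) x := by
  have hpos : 0 < 1 - x^2 * Real.sin t^2 := by linarith
  have hinner : HasDerivAt (fun y : ℝ => 1 - y^2 * Real.sin t^2)
      (-(2*x*Real.sin t^2)) x := by
    have h := ((hasDerivAt_pow 2 x).mul_const (Real.sin t^2)).const_sub 1
    refine h.congr_deriv (Eq.symm ?_)
    push_cast
    ring
  have h := (Real.hasDerivAt_sqrt hpos.ne').comp x hinner
  refine h.congr_deriv (Eq.symm ?_)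
  have hw := Real.sqrt_pos.mpr hpos
  field_simp

lemma hasDerivAt_inv_sqrt_base {x : ℝ} (t : ℝ) (hx : x^2 * Real.sin t^2 < 1) :
    HasDerivAt (fun y : ℝ => 1 / Real.sqrt (1 - y^2 * Real.sin t^2))
      (x * (Real.sin t^2 / (Real.sqrt (1 - x^2 * Real.sin t^2))^3)) x := by
  have hpos : 0 < 1 - x^2 * Real.sin t^2 := by linarith
  have hw := Real.sqrt_pos.mpr hpos
  have h := (hasDerivAt_const x (1:ℝ)).div (hasDerivAt_sqrt_base t hx) hw.ne'
  refine h.congr_deriv (Eq.symm ?_)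
  have hsq : Real.sqrt (1 - x^2 * Real.sin t^2) ^ 2 = 1 - x^2 * Real.sin t^2 :=
    Real.sq_sqrt hpos.le
  field_simp
  ring

lemma ball_base_lt {q x : ℝ} (hq0 : 0 < q) (hq1 : q < 1)
    (hx : x ∈ Metric.ball q ((1-q)/2)) (t : ℝ) : x^2 * Real.sin t^2 < 1 := by
  nlinarith [sq_lt_of_ball hq0 hq1 hx, r_lt_one hq0 hq1, Real.sin_sq_le_one t,
    sq_nonneg x, sq_nonneg (Real.sin t)]

lemma hasDerivAt_Ec {q : ℝ} (hq0 : 0 < q) (hq1 : q < 1) :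
    HasDerivAt Ec (-q * JE q) q := by
  have hq2 : q^2 < 1 := by nlinarith
  set r : ℝ := (1+q)/2 with hr
  have hr1 : r^2 < 1 := r_lt_one hq0 hq1
  have hrpos : 0 < 1 - r^2 := by linarith
  have hεpos : 0 < (1-q)/2 := by linarith
  have hqball : q ∈ Metric.ball q ((1-q)/2) := Metric.mem_ball_self hεpos
  have main := intervalIntegral.hasDerivAt_integral_of_dominated_loc_of_deriv_le
    (F := fun x t => Real.sqrt (1 - x^2 * Real.sin t^2))
    (F' := fun x t => -x * (Real.sin t^2 / Real.sqrt (1 - x^2 * Real.sin t^2)))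
    (x₀ := q) (a := 0) (b := π/2) (μ := volume)
    (bound := fun _ => 1 / Real.sqrt (1 - r^2)) (Metric.ball_mem_nhds q hεpos)
    (Filter.Eventually.of_forall fun x => ((cont_base x).sqrt).aestronglyMeasurable)
    (intgr_w q)
    ((continuous_const.mul ((Real.continuous_sin.pow 2).div (cont_w q)
        fun t => (w_pos hq2 t).ne')).aestronglyMeasurable)
    (Filter.Eventually.of_forall fun t _ x hx => ?_)
    intervalIntegrable_const
    (Filter.Eventually.of_forall fun t _ x hx =>
      hasDerivAt_sqrt_base t (ball_base_lt hq0 hq1 hx t))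
  · have := main.2
    rwa [show (∫ t in (0:ℝ)..(π/2), -q * (Real.sin t^2 / Real.sqrt (1 - q^2 * Real.sin t^2)))
        = -q * JE q from intervalIntegral.integral_const_mul _ _] at this
  · -- the bound
    have hx2 : x^2 < r^2 := sq_lt_of_ball hq0 hq1 hx
    have hxabs : |x| < 1 := by nlinarith [abs_nonneg x, sq_abs x]
    have hwle : Real.sqrt (1 - r^2) ≤ Real.sqrt (1 - x^2 * Real.sin t^2) :=
      Real.sqrt_le_sqrt (by nlinarith [Real.sin_sq_le_one t, sq_nonneg x, sq_nonneg (Real.sin t)])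
    have hdiv : Real.sin t^2 / Real.sqrt (1 - x^2 * Real.sin t^2)
        ≤ 1 / Real.sqrt (1 - r^2) :=
      div_le_div₀ zero_le_one (Real.sin_sq_le_one t) (Real.sqrt_pos.mpr hrpos) hwle
    have hdnn : 0 ≤ Real.sin t^2 / Real.sqrt (1 - x^2 * Real.sin t^2) := by positivity
    rw [Real.norm_eq_abs, abs_mul, abs_neg, abs_of_nonneg hdnn]
    calc |x| * (Real.sin t^2 / Real.sqrt (1 - x^2 * Real.sin t^2))
        ≤ 1 * (1 / Real.sqrt (1 - r^2)) :=
          mul_le_mul hxabs.le hdiv hdnn zero_le_one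
      _ = 1 / Real.sqrt (1 - r^2) := one_mul _

lemma hasDerivAt_Kc {q : ℝ} (hq0 : 0 < q) (hq1 : q < 1) :
    HasDerivAt Kc (q * JK q) q := by
  have hq2 : q^2 < 1 := by nlinarith
  set r : ℝ := (1+q)/2 with hr
  have hr1 : r^2 < 1 := r_lt_one hq0 hq1
  have hrpos : 0 < 1 - r^2 := by linarith
  have hεpos : 0 < (1-q)/2 := by linarith
  have main := intervalIntegral.hasDerivAt_integral_of_dominated_loc_of_deriv_le
    (F := fun x t => 1 / Real.sqrt (1 - x^2 * Real.sin t^2))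
    (F' := fun x t => x * (Real.sin t^2 / (Real.sqrt (1 - x^2 * Real.sin t^2))^3))
    (x₀ := q) (a := 0) (b := π/2) (μ := volume)
    (bound := fun _ => 1 / (Real.sqrt (1 - r^2))^3) (Metric.ball_mem_nhds q hεpos)
    (Filter.Eventually.of_forall fun x =>
      (measurable_const.div ((cont_base x).sqrt.measurable)).aestronglyMeasurable)
    (intgr_invw hq2)
    ((continuous_const.mul ((Real.continuous_sin.pow 2).div ((cont_w q).pow 3)
        fun t => pow_ne_zero 3 (w_pos hq2 t).ne')).aestronglyMeasurable)
    (Filter.Eventually.of_forall fun t _ x hx => ?_)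
    intervalIntegrable_const
    (Filter.Eventually.of_forall fun t _ x hx =>
      hasDerivAt_inv_sqrt_base t (ball_base_lt hq0 hq1 hx t))
  · have := main.2
    rwa [show (∫ t in (0:ℝ)..(π/2),
          q * (Real.sin t^2 / (Real.sqrt (1 - q^2 * Real.sin t^2))^3))
        = q * JK q from intervalIntegral.integral_const_mul _ _] at this
  · have hx2 : x^2 < r^2 := sq_lt_of_ball hq0 hq1 hx
    have hxabs : |x| < 1 := by nlinarith [abs_nonneg x, sq_abs x]
    have hwle : Real.sqrt (1 - r^2) ≤ Real.sqrt (1 - x^2 * Real.sin t^2) :=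
      Real.sqrt_le_sqrt (by nlinarith [Real.sin_sq_le_one t, sq_nonneg x, sq_nonneg (Real.sin t)])
    have hwle3 : (Real.sqrt (1 - r^2))^3 ≤ (Real.sqrt (1 - x^2 * Real.sin t^2))^3 :=
      pow_le_pow_left₀ (Real.sqrt_nonneg _) hwle 3
    have hdiv : Real.sin t^2 / (Real.sqrt (1 - x^2 * Real.sin t^2))^3
        ≤ 1 / (Real.sqrt (1 - r^2))^3 :=
      div_le_div₀ zero_le_one (Real.sin_sq_le_one t)
        (by positivity) hwle3
    have hdnn : 0 ≤ Real.sin t^2 / (Real.sqrt (1 - x^2 * Real.sin t^2))^3 := by positivity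
    rw [Real.norm_eq_abs, abs_mul, abs_of_nonneg hdnn]
    calc |x| * (Real.sin t^2 / (Real.sqrt (1 - x^2 * Real.sin t^2))^3)
        ≤ 1 * (1 / (Real.sqrt (1 - r^2))^3) :=
          mul_le_mul hxabs.le hdiv hdnn zero_le_one
      _ = 1 / (Real.sqrt (1 - r^2))^3 := one_mul _

lemma cont_s2w {q : ℝ} (hq : q^2 < 1) :
    Continuous fun θ : ℝ => Real.sin θ^2 / Real.sqrt (1 - q^2 * Real.sin θ^2) :=
  (Real.continuous_sin.pow 2).div (cont_w q) fun θ => (w_pos hq θ).ne'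

lemma cont_s2w3 {q : ℝ} (hq : q^2 < 1) :
    Continuous fun θ : ℝ => Real.sin θ^2 / (Real.sqrt (1 - q^2 * Real.sin θ^2))^3 :=
  (Real.continuous_sin.pow 2).div ((cont_w q).pow 3)
    fun θ => pow_ne_zero 3 (w_pos hq θ).ne'

lemma cont_num3 {q : ℝ} (hq : q^2 < 1) :
    Continuous fun θ : ℝ => (1 - 2*Real.sin θ^2 + q^2*Real.sin θ^4)
      / (Real.sqrt (1 - q^2 * Real.sin θ^2))^3 := by
  refine Continuous.div (by continuity) ((cont_w q).pow 3)
    fun θ => pow_ne_zero 3 (w_pos hq θ).ne'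

lemma id1 {q : ℝ} (hq : q^2 < 1) : q^2 * JE q = Kc q - Ec q := by
  have h : ∀ θ : ℝ, q^2 * (Real.sin θ^2 / Real.sqrt (1 - q^2 * Real.sin θ^2))
      = 1 / Real.sqrt (1 - q^2 * Real.sin θ^2) - Real.sqrt (1 - q^2 * Real.sin θ^2) := by
    intro θ
    have hpos := base_pos hq θ
    have hw := w_pos hq θ
    have hsq : Real.sqrt (1 - q^2 * Real.sin θ^2) ^ 2 = 1 - q^2 * Real.sin θ^2 :=
      Real.sq_sqrt hpos.le
    field_simp
    rw [hsq]; ring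
  rw [JE, ← intervalIntegral.integral_const_mul]
  simp_rw [h]
  rw [intervalIntegral.integral_sub (intgr_invw hq) (intgr_w q)]
  rfl

lemma ibp {q : ℝ} (hq : q^2 < 1) :
    (∫ θ in (0:ℝ)..(π/2), (1 - 2*Real.sin θ^2 + q^2*Real.sin θ^4)
      / (Real.sqrt (1 - q^2 * Real.sin θ^2))^3) = 0 := by
  have hderiv : ∀ θ ∈ uIcc (0:ℝ) (π/2),
      HasDerivAt (fun θ : ℝ => Real.sin θ * Real.cos θ / Real.sqrt (1 - q^2 * Real.sin θ^2))
        ((1 - 2*Real.sin θ^2 + q^2*Real.sin θ^4)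
          / (Real.sqrt (1 - q^2 * Real.sin θ^2))^3) θ := by
    intro θ _
    have hpos := base_pos hq θ
    have hw := w_pos hq θ
    have hsq : Real.sqrt (1 - q^2 * Real.sin θ^2) ^ 2 = 1 - q^2 * Real.sin θ^2 :=
      Real.sq_sqrt hpos.le
    have hnum : HasDerivAt (fun θ : ℝ => Real.sin θ * Real.cos θ)
        (Real.cos θ * Real.cos θ + Real.sin θ * -Real.sin θ) θ :=
      (Real.hasDerivAt_sin θ).mul (Real.hasDerivAt_cos θ)
    have hinner : HasDerivAt (fun θ : ℝ => 1 - q^2 * Real.sin θ^2)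
        (-(q^2 * (2 * Real.sin θ ^ 1 * Real.cos θ))) θ := by
      have := (((Real.hasDerivAt_sin θ).pow 2).const_mul (q^2)).const_sub 1
      refine this.congr_deriv (Eq.symm ?_) <;> push_cast <;> ring
    have hden : HasDerivAt (fun θ : ℝ => Real.sqrt (1 - q^2 * Real.sin θ^2))
        (1 / (2 * Real.sqrt (1 - q^2 * Real.sin θ^2))
          * -(q^2 * (2 * Real.sin θ ^ 1 * Real.cos θ))) θ :=
      (Real.hasDerivAt_sqrt hpos.ne').comp θ hinner
    have h := hnum.div hden hw.ne'
    refine h.congr_deriv (Eq.symm ?_)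
    have hc : Real.cos θ^2 = 1 - Real.sin θ^2 := Real.cos_sq' θ
    set w := Real.sqrt (1 - q^2 * Real.sin θ^2) with hwdef
    rw [show (((Real.cos θ * Real.cos θ + Real.sin θ * -Real.sin θ) * w
          - Real.sin θ * Real.cos θ * (1 / (2 * w) * -(q ^ 2 * (2 * Real.sin θ ^ 1 * Real.cos θ)))) / w ^ 2)
        = ((Real.cos θ^2 - Real.sin θ^2) * w^2 + q^2 * Real.sin θ^2 * Real.cos θ^2) / w^3 from by
        field_simp; ring, hsq, hc]
    exact congrArg (fun z => z / w^3) (by ring)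
  have h0 := intervalIntegral.integral_eq_sub_of_hasDerivAt hderiv
    ((cont_num3 hq).intervalIntegrable _ _)
  rw [h0]
  simp [Real.cos_pi_div_two, Real.sin_zero]

lemma id2 {q : ℝ} (hq : q^2 < 1) : (1-q^2) * JK q = Kc q - JE q := by
  have key : ∀ θ : ℝ, (1-q^2) * (Real.sin θ^2 / (Real.sqrt (1 - q^2 * Real.sin θ^2))^3)
      = 1 / Real.sqrt (1 - q^2 * Real.sin θ^2)
        - Real.sin θ^2 / Real.sqrt (1 - q^2 * Real.sin θ^2)
        - (1 - 2*Real.sin θ^2 + q^2*Real.sin θ^4)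
          / (Real.sqrt (1 - q^2 * Real.sin θ^2))^3 := by
    intro θ
    have hpos := base_pos hq θ
    have hw := w_pos hq θ
    have hsq : Real.sqrt (1 - q^2 * Real.sin θ^2) ^ 2 = 1 - q^2 * Real.sin θ^2 :=
      Real.sq_sqrt hpos.le
    field_simp
    linear_combination (-(1 - Real.sin θ^2)) * hsq
  rw [JK, ← intervalIntegral.integral_const_mul]
  simp_rw [key]
  rw [intervalIntegral.integral_sub
      (((intgr_invw hq).sub ((cont_s2w hq).intervalIntegrable _ _)))
      ((cont_num3 hq).intervalIntegrable _ _),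
    intervalIntegral.integral_sub (intgr_invw hq) ((cont_s2w hq).intervalIntegrable _ _),
    ibp hq]
  rw [sub_zero]
  rfl

lemma JE_nonneg (q : ℝ) : 0 ≤ JE q :=
  intervalIntegral.integral_nonneg (by positivity) fun θ _ => by positivity

lemma JK_pos {q : ℝ} (hq : q^2 < 1) : 0 < JK q := by
  refine intervalIntegral_pos_of_pos_on ((cont_s2w3 hq).intervalIntegrable _ _)
    (fun θ hθ => ?_) (by positivity)
  have hs : 0 < Real.sin θ := Real.sin_pos_of_pos_of_lt_pi hθ.1
    (lt_trans hθ.2 (by linarith [pi_pos]))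
  have := w_pos hq θ
  positivity

lemma hasDerivAt_fc {q : ℝ} (hq0 : 0 < q) (hq1 : q < 1) :
    HasDerivAt fc (q * ((20*q^2-13)*Kc q + 20*(1-2*q^2)*Ec q)) q := by
  have hq2 : q^2 < 1 := by nlinarith
  have hq2ne : (1:ℝ) - q^2 ≠ 0 := by nlinarith
  have hK := hasDerivAt_Kc hq0 hq1
  have hE := hasDerivAt_Ec hq0 hq1
  have hA : HasDerivAt (fun x : ℝ => 4*x^4 - 5*x^2 + 1) (16*q^3 - 10*q) q := by
    have := (((hasDerivAt_pow 4 q).const_mul (4:ℝ)).sub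
      ((hasDerivAt_pow 2 q).const_mul (5:ℝ))).add_const 1
    refine this.congr_deriv (Eq.symm ?_) <;> push_cast <;> ring
  have hB : HasDerivAt (fun x : ℝ => -8*x^4 + 8*x^2 - 1) (-32*q^3 + 16*q) q := by
    have := (((hasDerivAt_pow 4 q).const_mul (-8:ℝ)).add
      ((hasDerivAt_pow 2 q).const_mul (8:ℝ))).sub_const 1
    refine this.congr_deriv (Eq.symm ?_) <;> push_cast <;> ring
  have h : HasDerivAt fc ((16*q^3 - 10*q) * Kc q + (4*q^4 - 5*q^2 + 1) * (q * JK q)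
      + ((-32*q^3 + 16*q) * Ec q + (-8*q^4 + 8*q^2 - 1) * (-q * JE q))) q :=
    (hA.mul hK).add (hB.mul hE)
  have hJE : JE q = (Kc q - Ec q) / q^2 := by
    rw [eq_div_iff (by positivity)]
    linear_combination id1 hq2
  have hJK : JK q = (Kc q - JE q) / (1 - q^2) := by
    rw [eq_div_iff hq2ne]
    linear_combination id2 hq2
  convert h using 1
  rw [hJK, hJE]
  field_simp
  ring

lemma hasDerivAt_G {q : ℝ} (hq0 : 0 < q) (hq1 : q < 1) :
    HasDerivAt (fun x => 2 * Ec x - Kc x) (2 * (-q * JE q) - q * JK q) q :=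
  ((hasDerivAt_Ec hq0 hq1).const_mul 2).sub (hasDerivAt_Kc hq0 hq1)

lemma G_strictAntiOn : StrictAntiOn (fun x => 2 * Ec x - Kc x) (Ioo (0:ℝ) 1) := by
  refine strictAntiOn_of_deriv_neg (convex_Ioo 0 1)
    (fun x hx => ((hasDerivAt_G hx.1 hx.2).continuousAt).continuousWithinAt) fun x hx => ?_
  rw [interior_Ioo] at hx
  have hq2 : x^2 < 1 := by nlinarith [hx.1, hx.2]
  rw [(hasDerivAt_G hx.1 hx.2).deriv]
  have h1 := JE_nonneg x
  have h2 := JK_pos hq2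
  nlinarith [hx.1]

theorem stmt_5 (qstar : ℝ) (hqs : qstar ∈ Ioo (0:ℝ) 1) (hqs0 : 2 * Ec qstar = Kc qstar) :
    0 < fc (1 / Real.sqrt 2) ∧
    (∀ q ∈ Ico qstar 1, fc q < 0) ∧
    StrictAntiOn fc (Ioo (1 / Real.sqrt 2) qstar) ∧
    ∃! qhat : ℝ, (qhat ∈ Ioo (1 / Real.sqrt 2) qstar ∧ fc qhat = 0) ∧
      (∀ q ∈ Ico (1 / Real.sqrt 2) qhat, 0 < fc q) ∧
      (∀ q ∈ Ioo qhat 1, fc q < 0) := by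
  set q0 : ℝ := 1 / Real.sqrt 2 with hq0def
  have hq0mem : q0 ∈ Ioo (0:ℝ) 1 := q0_mem
  have hq0sq : q0^2 = 1/2 := q0_sq
  have hq04 : q0^4 = 1/4 := by
    rw [show q0^4 = (q0^2)^2 from by ring, hq0sq]; norm_num
  have hGq0 : 0 < 2 * Ec q0 - Kc q0 := by linarith [twoEK_q0]
  have hGstar : 2 * Ec qstar - Kc qstar = 0 := by linarith
  -- q0 < qstar
  have hq0lt : q0 < qstar := by
    by_contra hle
    push_neg at hle
    rcases eq_or_lt_of_le hle with heq | hlt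
    · rw [heq] at hGstar; linarith
    · have := G_strictAntiOn hqs hq0mem hlt
      simp only at this
      linarith
  -- comparison facts
  have h2EgtK : ∀ q : ℝ, 0 < q → q < qstar → Kc q < 2 * Ec q := by
    intro q hq hqlt
    have hmem : q ∈ Ioo (0:ℝ) 1 := ⟨hq, lt_trans hqlt hqs.2⟩
    have := G_strictAntiOn hmem hqs hqlt
    simp only at this
    linarith
  have h2EleK : ∀ q : ℝ, qstar ≤ q → q < 1 → 2 * Ec q ≤ Kc q := by
    intro q hge hlt
    rcases eq_or_lt_of_le hge with heq | hlt'
    · rw [← heq]; linarith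
    · have := G_strictAntiOn hqs ⟨lt_trans hqs.1 hlt', hlt⟩ hlt'
      simp only at this
      linarith
  -- Part 1
  have part1 : 0 < fc q0 := by
    have h := twoEK_q0
    simp only [fc]
    rw [hq0sq, hq04]
    rw [← hq0def] at h
    nlinarith
  -- Part 2
  have part2 : ∀ q ∈ Ico qstar 1, fc q < 0 := by
    rintro q ⟨hge, hlt1⟩
    have hq0' : 0 < q := lt_of_lt_of_le hqs.1 hge
    have hq2 : q^2 < 1 := by nlinarith
    have hqhalf : 1/2 < q^2 := by nlinarith [hq0mem.1, hq0lt]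
    have hK := Kc_pos hq2
    have hE := Ec_pos hq2
    have hEK := h2EleK q hge hlt1
    simp only [fc]
    rcases le_or_gt (-8*q^4 + 8*q^2 - 1) 0 with hB | hB
    · have hA : 4*q^4 - 5*q^2 + 1 < 0 := by nlinarith
      nlinarith [mul_pos (neg_pos.mpr hA) hK, mul_nonneg (neg_nonneg.mpr hB) hE.le]
    · have hhalf : Ec q ≤ Kc q / 2 := by linarith
      have h3 := mul_le_mul_of_nonneg_left hhalf hB.le
      nlinarith [mul_pos hK (show 0 < q^2 - 1/2 by linarith)]
  -- Part 3
  have part3 : StrictAntiOn fc (Ioo q0 qstar) := by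
    refine strictAntiOn_of_deriv_neg (convex_Ioo _ _) (fun x hx => ?_) (fun x hx => ?_)
    · have hx0 : 0 < x := lt_trans hq0mem.1 hx.1
      have hx1 : x < 1 := lt_trans hx.2 hqs.2
      exact (hasDerivAt_fc hx0 hx1).continuousAt.continuousWithinAt
    · rw [interior_Ioo] at hx
      have hx0 : 0 < x := lt_trans hq0mem.1 hx.1
      have hx1 : x < 1 := lt_trans hx.2 hqs.2
      have hx2 : x^2 < 1 := by nlinarith
      have hxhalf : 1/2 < x^2 := by nlinarith [hq0mem.1, hx.1]
      have hK := Kc_pos hx2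
      have hE := Ec_pos hx2
      have hKlt := h2EgtK x hx0 hx.2
      rw [(hasDerivAt_fc hx0 hx1).deriv]
      apply mul_neg_of_pos_of_neg hx0
      rcases le_or_gt (20*x^2 - 13) 0 with h | h
      · nlinarith [mul_nonneg (neg_nonneg.mpr h) hK.le,
          mul_pos hE (show 0 < 2*x^2 - 1 by linarith)]
      · have h3 := mul_le_mul_of_nonneg_left hKlt.le h.le
        nlinarith
  -- existence of qhat
  have hcont : ContinuousOn fc (Icc q0 qstar) := fun x hx =>
    (hasDerivAt_fc (lt_of_lt_of_le hq0mem.1 hx.1)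
      (lt_of_le_of_lt hx.2 hqs.2)).continuousAt.continuousWithinAt
  have hfqs : fc qstar < 0 := part2 qstar ⟨le_refl _, hqs.2⟩
  obtain ⟨qhat, hqhatmem, hqhat0⟩ :=
    intermediate_value_Icc' hq0lt.le hcont
      (show (0:ℝ) ∈ Icc (fc qstar) (fc q0) from ⟨hfqs.le, part1.le⟩)
  have hne1 : qhat ≠ q0 := fun h => by rw [h] at hqhat0; linarith
  have hne2 : qhat ≠ qstar := fun h => by rw [h] at hqhat0; linarith
  have hqhatIoo : qhat ∈ Ioo q0 qstar :=
    ⟨lt_of_le_of_ne hqhatmem.1 (Ne.symm hne1), lt_of_le_of_ne hqhatmem.2 hne2⟩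
  refine ⟨part1, part2, part3, qhat, ⟨⟨hqhatIoo, hqhat0⟩, ?_, ?_⟩, ?_⟩
  · rintro q ⟨hge, hlt⟩
    rcases eq_or_lt_of_le hge with heq | hlt'
    · rw [← heq]; exact part1
    · have hq : q ∈ Ioo q0 qstar := ⟨hlt', lt_trans hlt hqhatIoo.2⟩
      have := part3 hq hqhatIoo hlt
      linarith
  · rintro q ⟨hgt, hlt1⟩
    rcases lt_or_ge q qstar with h | h
    · have := part3 hqhatIoo ⟨lt_trans hqhatIoo.1 hgt, h⟩ hgt
      linarith
    · exact part2 q ⟨h, hlt1⟩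
  · rintro y ⟨⟨hymem, hy0⟩, -, -⟩
    rcases lt_trichotomy y qhat with h | h | h
    · have := part3 ⟨hymem.1, hymem.2⟩ hqhatIoo h
      rw [hy0, hqhat0] at this
      exact absurd this (lt_irrefl 0)
    · exact h
    · have := part3 hqhatIoo ⟨hymem.1, hymem.2⟩ h
      rw [hy0, hqhat0] at this
      exact absurd this (lt_irrefl 0)
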